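/- Let H_k be symmetric positive definite with smallest eigenvalue λ_min(H_k), let s, y ∈ ℝ^d with sᵀy > 0, ρ, p > 0, b = 1/(sᵀy + ρ/p), and let H_{k+1} be the S-BFGS update. Then for every unit vector z: zᵀ H_{k+1} z ≥ λ_min(H_k)‖z - b y (sᵀz)‖² + (1/(sᵀy + ρ/p))(zᵀs)². In particular λ_min(H_{k+1}) > 0. -/

import Mathlib

open Matrix

lemma vecMulVec_mulVec' {d : ℕ} (u v z : Fin d → ℝ) :
    vecMulVec u v *ᵥ z = (v ⬝ᵥ z) • u := by
  funext i
  simp only [vecMulVec_apply, mulVec, dotProduct, Pi.smul_apply, smul_eq_mul,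
    Finset.sum_mul]
  exact Finset.sum_congr rfl fun x _ => by ring

/-- Lower eigenvalue bound for the S-BFGS update. -/
theorem sbfgs_lower_eigen_bound {d : ℕ} (s y : Fin d → ℝ) (hsy : 0 < s ⬝ᵥ y)
    (Hk : Matrix (Fin d) (Fin d) ℝ) (hHk : Hk.PosDef)
    (lammin : ℝ) (hlam : ∀ v : Fin d → ℝ, lammin * (v ⬝ᵥ v) ≤ v ⬝ᵥ (Hk *ᵥ v))
    (p ρ : ℝ) (hp : 0 < p) (hρ : 0 < ρ)
    (b a : ℝ) (hb : b = 1 / (s ⬝ᵥ y + ρ / p))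
    (ha : a = (1 + b * (y ⬝ᵥ (Hk *ᵥ y))) / (s ⬝ᵥ y + ρ / (2 * p)))
    (H1 : Matrix (Fin d) (Fin d) ℝ)
    (hH1 : H1 = Hk + a • vecMulVec s s
        - b • (vecMulVec (Hk *ᵥ y) s + vecMulVec s (Hk *ᵥ y))) :
    (∀ z : Fin d → ℝ, z ⬝ᵥ z = 1 →
        lammin * ((z - (b * (s ⬝ᵥ z)) • y) ⬝ᵥ (z - (b * (s ⬝ᵥ z)) • y))
            + (1 / (s ⬝ᵥ y + ρ / p)) * (z ⬝ᵥ s) ^ 2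
          ≤ z ⬝ᵥ (H1 *ᵥ z))
      ∧ ∀ z : Fin d → ℝ, z ≠ 0 → 0 < z ⬝ᵥ (H1 *ᵥ z) := by
  have hT : Hkᵀ = Hk := by
    rw [← Hk.conjTranspose_eq_transpose_of_trivial, hHk.isHermitian.eq]
  have hsym : ∀ u v : Fin d → ℝ, u ⬝ᵥ (Hk *ᵥ v) = v ⬝ᵥ (Hk *ᵥ u) := by
    intro u v
    rw [dotProduct_mulVec, ← mulVec_transpose, hT, dotProduct_comm]
  have hpos : ∀ v : Fin d → ℝ, v ≠ 0 → 0 < v ⬝ᵥ (Hk *ᵥ v) := by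
    intro v hv
    simpa using hHk.dotProduct_mulVec_pos hv
  have hpos' : ∀ v : Fin d → ℝ, 0 ≤ v ⬝ᵥ (Hk *ᵥ v) := by
    intro v
    by_cases hv : v = 0
    · simp [hv]
    · exact (hpos v hv).le
  -- key quadratic identity
  have key : ∀ z : Fin d → ℝ, z ⬝ᵥ (H1 *ᵥ z) =
      (z - (b * (s ⬝ᵥ z)) • y) ⬝ᵥ (Hk *ᵥ (z - (b * (s ⬝ᵥ z)) • y))
        + (a - b ^ 2 * (y ⬝ᵥ (Hk *ᵥ y))) * (s ⬝ᵥ z) ^ 2 := by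
    intro z
    subst hH1
    simp only [add_mulVec, sub_mulVec, smul_mulVec, vecMulVec_mulVec',
      mulVec_sub, mulVec_smul, dotProduct_add, dotProduct_sub, dotProduct_smul,
      sub_dotProduct, smul_dotProduct, smul_eq_mul]
    rw [hsym y z, dotProduct_comm s z, dotProduct_comm (Hk *ᵥ y) z, hsym z y]
    ring
  -- key scalar inequality
  set Q := y ⬝ᵥ (Hk *ᵥ y) with hQ
  have hQ0 : 0 ≤ Q := hpos' y
  have hc : 0 < s ⬝ᵥ y + ρ / p := by positivity
  have hc' : 0 < s ⬝ᵥ y + ρ / (2 * p) := by positivity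
  have hdiff : s ⬝ᵥ y + ρ / (2 * p) < s ⬝ᵥ y + ρ / p := by
    have : ρ / (2 * p) < ρ / p := by
      apply div_lt_div_of_pos_left hρ hp
      linarith
    linarith
  have hkey : 1 / (s ⬝ᵥ y + ρ / p) ≤ a - b ^ 2 * Q := by
    rw [ha, hb, ← sub_nonneg]
    have h : (1 + 1 / (s ⬝ᵥ y + ρ / p) * Q) / (s ⬝ᵥ y + ρ / (2 * p))
        - (1 / (s ⬝ᵥ y + ρ / p)) ^ 2 * Q - 1 / (s ⬝ᵥ y + ρ / p)
        = ((s ⬝ᵥ y + ρ / p + Q) * ((s ⬝ᵥ y + ρ / p) - (s ⬝ᵥ y + ρ / (2 * p))))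
          / ((s ⬝ᵥ y + ρ / p) ^ 2 * (s ⬝ᵥ y + ρ / (2 * p))) := by
      field_simp
      ring
    rw [h]
    apply div_nonneg (mul_nonneg (by linarith) (by linarith)) (by positivity)
  have hb0 : 0 < b := by rw [hb]; positivity
  have habQ : 0 < a - b ^ 2 * Q := lt_of_lt_of_le (hb ▸ hb0) hkey
  constructor
  · intro z _
    rw [key z]
    have h1 := hlam (z - (b * (s ⬝ᵥ z)) • y)
    have h2 : (1 / (s ⬝ᵥ y + ρ / p)) * (z ⬝ᵥ s) ^ 2 ≤ (a - b ^ 2 * Q) * (s ⬝ᵥ z) ^ 2 := by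
      rw [dotProduct_comm z s]
      exact mul_le_mul_of_nonneg_right hkey (sq_nonneg _)
    linarith
  · intro z hz
    rw [key z]
    by_cases hw : z - (b * (s ⬝ᵥ z)) • y = 0
    · have hsz : s ⬝ᵥ z ≠ 0 := by
        intro h0
        apply hz
        have := hw
        rw [h0, mul_zero, zero_smul, sub_zero] at this
        exact this
      have : 0 < (a - b ^ 2 * Q) * (s ⬝ᵥ z) ^ 2 :=
        mul_pos habQ (by positivity)
      have := hpos' (z - (b * (s ⬝ᵥ z)) • y)
      linarith
    · have h1 := hpos _ hw
      have h2 : 0 ≤ (a - b ^ 2 * Q) * (s ⬝ᵥ z) ^ 2 :=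
        mul_nonneg habQ.le (sq_nonneg _)
      linarith
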